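/- arXiv:1903.01825 — 5 statements merged into one kernel-verified Lean document; each statement's English description precedes it below -/
import Mathlib

section
/- Lemma (crucial star lemma, part (b)): Let τ be a tree on {1,...,m+r}, k a cloud (k > m), s, s' distinct stars (≤ m) with {s,s'} ∉ E(τ). If {k,s} ∈ E(τ) and {k,s'} ∈ E'(τ), then {s,s'} ∈ E'(τ). -/
/-- The larger endpoint of an edge (an unordered pair). -/
def esup {n : ℕ} (e : Sym2 (Fin n)) : Fin n :=
  Sym2.lift ⟨fun a b => max a b, fun a b => max_comm a b⟩ e

/-- The smaller endpoint of an edge (an unordered pair). -/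
def einf {n : ℕ} (e : Sym2 (Fin n)) : Fin n :=
  Sym2.lift ⟨fun a b => min a b, fun a b => min_comm a b⟩ e

/-- The total order ≺ on edges: `{i,j} ≺ {i',j'}` (with `i<j`, `i'<j'`) iff `j' < j`,
or `j = j'` and `i' < i`. -/
def eprec {n : ℕ} (e e' : Sym2 (Fin n)) : Prop :=
  esup e' < esup e ∨ (esup e = esup e' ∧ einf e' < einf e)

lemma esup_le_of_eprec {n : ℕ} {e f : Sym2 (Fin n)} (h : eprec e f) : esup f ≤ esup e := by
  rcases h with h | ⟨h, _⟩
  · exact h.le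
  · exact h.ge

/-- Crucial star lemma, part (b): if `{k,s} ∈ E(τ)` and `{k,s'} ∈ E'(τ)` with `k` a cloud and
`s, s'` distinct stars not directly linked in `τ`, then `{s,s'} ∈ E'(τ)`. -/
theorem stmt9 (m r : ℕ) (τ : SimpleGraph (Fin (m + r))) (hτ : τ.IsTree)
    (k s s' : Fin (m + r)) (hk : m ≤ (k : ℕ)) (hs : (s : ℕ) < m) (hs' : (s' : ℕ) < m)
    (hne : s ≠ s') (hss' : ¬ τ.Adj s s')
    (hks : τ.Adj k s)
    (hks'1 : ¬ τ.Adj k s')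
    (hks'2 : ∀ p : τ.Walk k s', p.IsPath → ∀ e ∈ p.edges, eprec e s(k, s')) :
    ∀ p : τ.Walk s s', p.IsPath → ∀ e ∈ p.edges, eprec e s(s, s') := by
  intro p hp e he
  have hs'k : s' < k := by rw [Fin.lt_def]; omega
  have hsk : s < k := by rw [Fin.lt_def]; omega
  have hsupks' : esup (s(k, s') : Sym2 (Fin (m + r))) = k := by
    simp [esup, max_eq_left hs'k.le]
  suffices hke : k ≤ esup e by
    left
    have h1 : esup (s(s, s') : Sym2 (Fin (m + r))) < k := by
      simpa [esup] using max_lt hsk hs'k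
    exact lt_of_lt_of_le h1 hke
  by_cases hkp : k ∈ p.support
  · have hspec := p.take_spec hkp
    have hp₁ : (p.takeUntil k hkp).IsPath := hp.takeUntil hkp
    have hp₂ : (p.dropUntil k hkp).IsPath := hp.dropUntil hkp
    have he' : e ∈ (p.takeUntil k hkp).edges ∨ e ∈ (p.dropUntil k hkp).edges := by
      rw [← List.mem_append, ← SimpleGraph.Walk.edges_append, hspec]
      exact he
    rcases he' with h1 | h2
    · have huniq := hτ.existsUnique_path s k
      have hsingle : (SimpleGraph.Walk.cons hks.symm SimpleGraph.Walk.nil :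
          τ.Walk s k).IsPath := by simp [SimpleGraph.Walk.cons_isPath_iff, hks.ne']
      have heq : p.takeUntil k hkp =
          SimpleGraph.Walk.cons hks.symm SimpleGraph.Walk.nil :=
        huniq.unique hp₁ hsingle
      rw [heq] at h1
      simp only [SimpleGraph.Walk.edges_cons, SimpleGraph.Walk.edges_nil,
        List.mem_singleton] at h1
      subst h1
      have : esup (s(s, k) : Sym2 (Fin (m + r))) = k := by
        simp [esup, max_eq_right hsk.le]
      rw [this]
    · have h := hks'2 _ hp₂ e h2
      have := esup_le_of_eprec h
      rwa [hsupks'] at this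
  · have hq : (SimpleGraph.Walk.cons hks p).IsPath := by
      rw [SimpleGraph.Walk.cons_isPath_iff]; exact ⟨hp, hkp⟩
    have h := hks'2 _ hq e (by simp [SimpleGraph.Walk.edges_cons]; right; exact he)
    have := esup_le_of_eprec h
    rwa [hsupks'] at this
end

section
/- Lemma (crucial star lemma, part (c)): Let τ be a tree on {1,...,m+r}, k a cloud (k > m), s, s' distinct stars (≤ m) with {s,s'} ∉ E(τ). If both {k,s} ∈ E'(τ) and {k,s'} ∈ E'(τ), then {s,s'} ∈ E'(τ). -/
/-- Crucial star lemma, part (c): if `{k,s} ∈ E'(τ)` and `{k,s'} ∈ E'(τ)` with `k` a cloud and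
`s, s'` distinct stars not directly linked in `τ`, then `{s,s'} ∈ E'(τ)`. -/
theorem stmt10 (m r : ℕ) (τ : SimpleGraph (Fin (m + r))) (hτ : τ.IsTree)
    (k s s' : Fin (m + r)) (hk : m ≤ (k : ℕ)) (hs : (s : ℕ) < m) (hs' : (s' : ℕ) < m)
    (hne : s ≠ s') (hss' : ¬ τ.Adj s s')
    (hks1 : ¬ τ.Adj k s)
    (hks2 : ∀ p : τ.Walk k s, p.IsPath → ∀ e ∈ p.edges, eprec e s(k, s))
    (hks'1 : ¬ τ.Adj k s')
    (hks'2 : ∀ p : τ.Walk k s', p.IsPath → ∀ e ∈ p.edges, eprec e s(k, s')) :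
    ∀ p : τ.Walk s s', p.IsPath → ∀ e ∈ p.edges, eprec e s(s, s') := by
  intro p hp e he
  -- get paths k→s and k→s'
  obtain ⟨w1⟩ := hτ.isConnected.preconnected k s
  obtain ⟨w2⟩ := hτ.isConnected.preconnected k s'
  set q1 := w1.bypass with hq1
  set q2 := w2.bypass with hq2
  -- the walk s → s' through k
  set w : τ.Walk s s' := q1.reverse.append q2 with hw
  have hpb : p = w.bypass := (hτ.existsUnique_path s s').unique hp w.bypass_isPath
  have hsub : e ∈ q1.edges ∨ e ∈ q2.edges := by
    have : e ∈ w.edges := w.edges_bypass_subset (hpb ▸ he)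
    rw [hw, SimpleGraph.Walk.edges_append, SimpleGraph.Walk.edges_reverse] at this
    rcases List.mem_append.1 this with h | h
    · exact Or.inl (List.mem_reverse.1 h)
    · exact Or.inr h
  have hmax : ∀ a b : Fin (m + r), esup s(a, b) = max a b := fun a b => rfl
  have hks : (k : ℕ) ≤ (k : ℕ) := le_refl _
  have hsk : s ≤ k := by rw [Fin.le_def]; omega
  have hs'k : s' ≤ k := by rw [Fin.le_def]; omega
  have hkey : (k : ℕ) ≤ ((esup e : Fin (m + r)) : ℕ) := by
    rcases hsub with h | h
    · rcases hks2 q1 w1.bypass_isPath e h with h' | ⟨h', _⟩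
      · rw [hmax, max_eq_left hsk] at h'; exact le_of_lt h'
      · rw [hmax, max_eq_left hsk] at h'; omega
    · rcases hks'2 q2 w2.bypass_isPath e h with h' | ⟨h', _⟩
      · rw [hmax, max_eq_left hs'k] at h'; exact le_of_lt h'
      · rw [hmax, max_eq_left hs'k] at h'; omega
  left
  rw [hmax, Fin.lt_def]
  have hlt : ((max s s' : Fin (m + r)) : ℕ) < m := by
    rcases le_total s s' with h | h
    · rw [max_eq_right h]; exact hs'
    · rw [max_eq_left h]; exact hs
  omega
end

section
/- The map τ ↦ [τ, R(τ)] is a tree partition scheme: the intervals [τ, R(τ)] := {γ connected graph on {1,...,n} : E(τ) ⊆ E(γ) ⊆ E(τ) ∪ E'(τ)}, for τ ranging over spanning trees on {1,...,n}, form a partition of the set of connected graphs on {1,...,n}. The tree associated to a connected graph γ is obtained by Kruskal's algorithm with respect to the total edge order ≺. -/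
/-- `E'(τ)`: the set of non-tree edges `{i,j}` such that every edge on the unique `τ`-path
from `i` to `j` is ≺-smaller than `{i,j}`. -/
def Eprime {n : ℕ} (τ : SimpleGraph (Fin n)) : Set (Sym2 (Fin n)) :=
  {e | e ∉ τ.edgeSet ∧ ∀ i j : Fin n, e = s(i, j) →
      ∀ p : τ.Walk i j, p.IsPath → ∀ e' ∈ p.edges, eprec e' e}

open SimpleGraph

namespace Stmt11Aux

variable {n : ℕ}

/-- A natural-number weight realizing the order `eprec`. -/
def wgt {n : ℕ} (e : Sym2 (Fin n)) : ℕ :=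
  n * (n - 1 - (esup e : ℕ)) + (n - 1 - (einf e : ℕ))

lemma esup_mk (a b : Fin n) : esup s(a, b) = max a b := rfl
lemma einf_mk (a b : Fin n) : einf s(a, b) = min a b := rfl

lemma mk_einf_esup (e : Sym2 (Fin n)) : e = s(einf e, esup e) := by
  induction e using Sym2.ind with
  | _ a b =>
    rcases le_total a b with h | h
    · rw [einf_mk, esup_mk, min_eq_left h, max_eq_right h]
    · rw [einf_mk, esup_mk, min_eq_right h, max_eq_left h]
      exact Sym2.eq_swap

lemma nat_lex {m A B r s : ℕ} (hr : r < m) (hs : s < m) :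
    m * A + r < m * B + s ↔ A < B ∨ (A = B ∧ r < s) := by
  constructor
  · intro h
    rcases lt_trichotomy A B with h' | h' | h'
    · exact Or.inl h'
    · subst h'
      exact Or.inr ⟨rfl, Nat.lt_of_add_lt_add_left h⟩
    · exfalso
      have : m * B + s < m * A + r := by
        calc m * B + s < m * (B + 1) := by rw [Nat.mul_succ]; exact Nat.add_lt_add_left hs _
          _ ≤ m * A := Nat.mul_le_mul_left m h'
          _ ≤ m * A + r := Nat.le_add_right _ _
      exact absurd (h.trans this) (lt_irrefl _)
  · rintro (h | ⟨rfl, h⟩)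
    · calc m * A + r < m * (A + 1) := by rw [Nat.mul_succ]; exact Nat.add_lt_add_left hr _
        _ ≤ m * B := Nat.mul_le_mul_left m h
        _ ≤ m * B + s := Nat.le_add_right _ _
    · exact Nat.add_lt_add_left h _

lemma eprec_iff (f e : Sym2 (Fin n)) : eprec f e ↔ wgt f < wgt e := by
  have h1 : (esup e : ℕ) < n := (esup e).is_lt
  have h2 : (esup f : ℕ) < n := (esup f).is_lt
  have h3 : (einf e : ℕ) < n := (einf e).is_lt
  have h4 : (einf f : ℕ) < n := (einf f).is_lt
  unfold eprec wgt
  rw [nat_lex (by omega) (by omega)]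
  simp only [Fin.lt_def, Fin.ext_iff]
  omega

lemma wgt_inj {f e : Sym2 (Fin n)} (h : wgt f = wgt e) : f = e := by
  have h1 : (esup e : ℕ) < n := (esup e).is_lt
  have h2 : (esup f : ℕ) < n := (esup f).is_lt
  have h3 : (einf e : ℕ) < n := (einf e).is_lt
  have h4 : (einf f : ℕ) < n := (einf f).is_lt
  unfold wgt at h
  have hA : ¬ ((n - 1 - (esup f : ℕ)) < (n - 1 - (esup e : ℕ)) ∨
      ((n - 1 - (esup f : ℕ)) = (n - 1 - (esup e : ℕ)) ∧
        (n - 1 - (einf f : ℕ)) < (n - 1 - (einf e : ℕ)))) := by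
    rw [← nat_lex (show n - 1 - (einf f : ℕ) < n by omega) (by omega)]
    omega
  have hB : ¬ ((n - 1 - (esup e : ℕ)) < (n - 1 - (esup f : ℕ)) ∨
      ((n - 1 - (esup e : ℕ)) = (n - 1 - (esup f : ℕ)) ∧
        (n - 1 - (einf e : ℕ)) < (n - 1 - (einf f : ℕ)))) := by
    rw [← nat_lex (show n - 1 - (einf e : ℕ) < n by omega) (by omega)]
    omega
  have hsup : esup f = esup e := Fin.ext (by omega)
  have hinf : einf f = einf e := Fin.ext (by omega)
  rw [mk_einf_esup f, mk_einf_esup e, hsup, hinf]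

lemma eprec_of_le_of_ne {f e : Sym2 (Fin n)} (h : wgt f ≤ wgt e) (hne : f ≠ e) :
    eprec f e :=
  (eprec_iff f e).mpr (lt_of_le_of_ne h fun h' => hne (wgt_inj h'))

/-- The Kruskal tree of `γ`: keep an edge iff there is no path between its
endpoints consisting of strictly `≺`-smaller edges of `γ`. -/
def krt (γ : SimpleGraph (Fin n)) : SimpleGraph (Fin n) where
  Adj a b := γ.Adj a b ∧ ¬ ∃ p : γ.Walk a b, ∀ f ∈ p.edges, eprec f s(a, b)
  symm := by
    constructor
    rintro a b ⟨h1, h2⟩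
    refine ⟨h1.symm, ?_⟩
    rintro ⟨p, hp⟩
    refine h2 ⟨p.reverse, fun f hf => ?_⟩
    have hf' : f ∈ p.edges := by
      rw [Walk.edges_reverse, List.mem_reverse] at hf; exact hf
    have : s(a, b) = s(b, a) := Sym2.eq_swap
    rw [this]
    exact hp f hf'
  loopless := ⟨fun a h => γ.loopless.irrefl a h.1⟩

lemma krt_le (γ : SimpleGraph (Fin n)) : krt γ ≤ γ := fun _ _ h => h.1

lemma krt_prop (γ : SimpleGraph (Fin n)) :
    ∀ a b, γ.Adj a b → ¬(krt γ).Adj a b →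
      ∃ p : γ.Walk a b, ∀ f ∈ p.edges, eprec f s(a, b) := by
  intro a b h hk
  by_contra hc
  exact hk ⟨h, hc⟩

/-- Key lemma: if two vertices are joined by a `γ`-walk all of whose edges are
`≺`-smaller than `e`, then they are joined by a `T`-walk with the same property,
provided `T` has the "replacement" property `hprop`. -/
lemma lemA {γ T : SimpleGraph (Fin n)}
    (hprop : ∀ a b, γ.Adj a b → ¬T.Adj a b →
      ∃ p : γ.Walk a b, ∀ f ∈ p.edges, eprec f s(a, b)) :
    ∀ (k : ℕ) (e : Sym2 (Fin n)), wgt e ≤ k →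
      ∀ (a b : Fin n) (p : γ.Walk a b), (∀ f ∈ p.edges, eprec f e) →
        ∃ q : T.Walk a b, ∀ f ∈ q.edges, eprec f e := by
  intro k
  induction k with
  | zero =>
    intro e he a b p hp
    induction p with
    | nil => exact ⟨Walk.nil, by simp⟩
    | @cons a c b h p ih =>
      exact absurd ((eprec_iff _ _).mp (hp s(a, c) (by simp))) (by omega)
  | succ k IH =>
    intro e he a b p hp
    induction p with
    | nil => exact ⟨Walk.nil, by simp⟩
    | @cons a c b h p ih =>
      obtain ⟨q2, hq2⟩ := ih fun f hf => hp f (by simp [hf])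
      have hac : eprec s(a, c) e := hp _ (by simp)
      by_cases hT : T.Adj a c
      · refine ⟨Walk.cons hT q2, ?_⟩
        intro f hf
        rw [Walk.edges_cons, List.mem_cons] at hf
        rcases hf with rfl | hf
        · exact hac
        · exact hq2 f hf
      · obtain ⟨p0, hp0⟩ := hprop a c h hT
        have hw : wgt s(a, c) ≤ k := by
          have := (eprec_iff s(a, c) e).mp hac; omega
        obtain ⟨q1, hq1⟩ := IH s(a, c) hw a c p0 hp0
        refine ⟨q1.append q2, ?_⟩
        intro f hf
        rw [Walk.edges_append, List.mem_append] at hf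
        rcases hf with hf | hf
        · have t1 := (eprec_iff _ _).mp (hq1 f hf)
          have t2 := (eprec_iff _ _).mp hac
          exact (eprec_iff _ _).mpr (by omega)
        · exact hq2 f hf

lemma krt_connected {γ : SimpleGraph (Fin n)} (hγ : γ.Connected) :
    (krt γ).Connected := by
  have hreach : ∀ a b : Fin n, γ.Adj a b → (krt γ).Reachable a b := by
    intro a b h
    by_cases hT : (krt γ).Adj a b
    · exact hT.reachable
    · obtain ⟨p, hp⟩ := krt_prop γ a b h hT
      obtain ⟨q, _⟩ := lemA (krt_prop γ) (wgt s(a, b)) s(a, b) le_rfl a b p hp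
      exact ⟨q⟩
  have hnon : Nonempty (Fin n) := hγ.nonempty
  refine ⟨?_⟩
  intro a b
  obtain ⟨p⟩ := hγ.preconnected a b
  induction p with
  | nil => exact Reachable.refl _
  | cons h p ih => exact (hreach _ _ h).trans ih

/-- Transfer a `krt γ` walk to a `γ` walk. -/
def toGamma {γ : SimpleGraph (Fin n)} {a b : Fin n} (p : (krt γ).Walk a b) : γ.Walk a b :=
  p.transfer γ fun e he => edgeSet_mono (krt_le γ) (p.edges_subset_edgeSet he)

lemma edges_toGamma {γ : SimpleGraph (Fin n)} {a b : Fin n} (p : (krt γ).Walk a b) :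
    (toGamma p).edges = p.edges := Walk.edges_transfer _ _

lemma walk_split {V : Type*} {G : SimpleGraph V} :
    ∀ {a b : V} (p : G.Walk a b) {u v : V}, s(u, v) ∈ p.edges →
      (∃ (q : G.Walk a u) (r : G.Walk v b), p.edges = q.edges ++ s(u, v) :: r.edges) ∨
      (∃ (q : G.Walk a v) (r : G.Walk u b), p.edges = q.edges ++ s(u, v) :: r.edges) := by
  intro a b p
  induction p with
  | nil => intro u v h; simp at h
  | @cons a c b h p ih =>
    intro u v hm
    rw [Walk.edges_cons, List.mem_cons] at hm
    rcases hm with hm | hm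
    · rcases Sym2.eq_iff.mp hm with ⟨rfl, rfl⟩ | ⟨rfl, rfl⟩
      · exact Or.inl ⟨Walk.nil, p, by simp⟩
      · refine Or.inr ⟨Walk.nil, p, by simp [hm]⟩
    · rcases ih hm with ⟨q, r, he⟩ | ⟨q, r, he⟩
      · exact Or.inl ⟨Walk.cons h q, r, by simp [he]⟩
      · exact Or.inr ⟨Walk.cons h q, r, by simp [he]⟩

lemma krt_acyclic (γ : SimpleGraph (Fin n)) : (krt γ).IsAcyclic := by
  rw [isAcyclic_iff_forall_adj_isBridge]
  intro x y hxy
  rw [isBridge_iff]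
  refine fun hr => ?_
  rw [reachable_delete_edges_iff_exists_walk] at hr
  obtain ⟨w, hw⟩ := hr
  have hqpath : w.bypass.IsPath := w.bypass_isPath
  set q := w.bypass with hqdef
  have hqe : s(x, y) ∉ q.edges := fun h => hw (w.edges_bypass_subset h)
  set L := (s(x, y) :: q.edges).toFinset with hL
  obtain ⟨f, hfL, hfmax⟩ := L.exists_max_image wgt ⟨s(x, y), by simp [hL]⟩
  have hmemL : ∀ g, g = s(x, y) ∨ g ∈ q.edges → wgt g ≤ wgt f := by
    intro g hg
    exact hfmax g (by rw [hL, List.mem_toFinset, List.mem_cons]; exact hg)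
  by_cases hf : f = s(x, y)
  · refine hxy.2 ⟨toGamma q, ?_⟩
    intro g hg
    rw [edges_toGamma] at hg
    have hne : g ≠ s(x, y) := fun h => hqe (h ▸ hg)
    exact eprec_of_le_of_ne (hf ▸ hmemL g (Or.inr hg)) hne
  · have hfq : f ∈ q.edges := by
      have := List.mem_toFinset.mp hfL
      rw [List.mem_cons] at this
      exact this.resolve_left hf
    obtain ⟨u, v, rfl⟩ : ∃ u v, f = s(u, v) := ⟨einf f, esup f, mk_einf_esup f⟩
    have hadj : (krt γ).Adj u v := (SimpleGraph.mem_edgeSet _).mp (q.edges_subset_edgeSet hfq)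
    have hnodup : q.edges.Nodup := hqpath.edges_nodup
    rcases walk_split q hfq with ⟨q1, q2, he⟩ | ⟨q1, q2, he⟩
    · rw [he] at hnodup
      obtain ⟨-, h2, hdisj⟩ := List.nodup_append.mp hnodup
      have hn1 : s(u, v) ∉ q1.edges := fun hm => hdisj _ hm _ (by simp) rfl
      have hn2 : s(u, v) ∉ q2.edges := (List.nodup_cons.mp h2).1
      refine hadj.2 ⟨(toGamma q1.reverse).append (Walk.cons hxy.1 (toGamma q2.reverse)), ?_⟩
      intro g hg
      rw [Walk.edges_append, Walk.edges_cons, edges_toGamma, edges_toGamma,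
        Walk.edges_reverse, Walk.edges_reverse, List.mem_append, List.mem_cons,
        List.mem_reverse, List.mem_reverse] at hg
      rcases hg with hg | hg | hg
      · exact eprec_of_le_of_ne (hmemL g (Or.inr (he ▸ List.mem_append_left _ hg)))
          (fun h => hn1 (h ▸ hg))
      · subst hg
        exact eprec_of_le_of_ne (hmemL _ (Or.inl rfl)) (fun h => hf h.symm)
      · exact eprec_of_le_of_ne
          (hmemL g (Or.inr (he ▸ List.mem_append_right _ (List.mem_cons_of_mem _ hg))))
          (fun h => hn2 (h ▸ hg))
    · rw [he] at hnodup
      obtain ⟨-, h2, hdisj⟩ := List.nodup_append.mp hnodup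
      have hn1 : s(u, v) ∉ q1.edges := fun hm => hdisj _ hm _ (by simp) rfl
      have hn2 : s(u, v) ∉ q2.edges := (List.nodup_cons.mp h2).1
      have hswap : s(v, u) = s(u, v) := Sym2.eq_swap
      refine hadj.symm.2 ⟨(toGamma q1.reverse).append (Walk.cons hxy.1 (toGamma q2.reverse)), ?_⟩
      intro g hg
      rw [hswap]
      rw [Walk.edges_append, Walk.edges_cons, edges_toGamma, edges_toGamma,
        Walk.edges_reverse, Walk.edges_reverse, List.mem_append, List.mem_cons,
        List.mem_reverse, List.mem_reverse] at hg
      rcases hg with hg | hg | hg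
      · exact eprec_of_le_of_ne (hmemL g (Or.inr (he ▸ List.mem_append_left _ hg)))
          (fun h => hn1 (h ▸ hg))
      · subst hg
        exact eprec_of_le_of_ne (hmemL _ (Or.inl rfl)) (fun h => hf h.symm)
      · exact eprec_of_le_of_ne
          (hmemL g (Or.inr (he ▸ List.mem_append_right _ (List.mem_cons_of_mem _ hg))))
          (fun h => hn2 (h ▸ hg))


lemma krt_cond (γ : SimpleGraph (Fin n)) :
    ∀ e ∈ γ.edgeSet, e ∈ (krt γ).edgeSet ∨ e ∈ Eprime (krt γ) := by
  intro e he
  by_cases hk : e ∈ (krt γ).edgeSet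
  · exact Or.inl hk
  · refine Or.inr ⟨hk, ?_⟩
    intro i j hij p hp f hf
    subst hij
    have hadj : γ.Adj i j := (SimpleGraph.mem_edgeSet _).mp he
    have hnadj : ¬(krt γ).Adj i j := fun h => hk ((SimpleGraph.mem_edgeSet _).mpr h)
    obtain ⟨p0, hp0⟩ := krt_prop γ i j hadj hnadj
    obtain ⟨q, hq⟩ := lemA (krt_prop γ) _ s(i, j) le_rfl i j p0 hp0
    have huniq := (isAcyclic_iff_path_unique.mp (krt_acyclic γ))
      ⟨p, hp⟩ ⟨q.bypass, q.bypass_isPath⟩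
    have hpq : p = q.bypass := Subtype.mk_eq_mk.mp huniq
    exact hq f (q.edges_bypass_subset (hpq ▸ hf))

end Stmt11Aux

open Stmt11Aux

/-- The map `τ ↦ [τ, R(τ)]` is a tree partition scheme: every connected graph `γ` on
`{1,…,n}` lies in exactly one interval `[τ, R(τ)] = {γ : E(τ) ⊆ E(γ) ⊆ E(τ) ∪ E'(τ)}`
with `τ` a spanning tree. -/
theorem stmt11 (n : ℕ) (γ : SimpleGraph (Fin n)) (hγ : γ.Connected) :
    ∃! τ : SimpleGraph (Fin n), τ.IsTree ∧ τ ≤ γ ∧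
      ∀ e ∈ γ.edgeSet, e ∈ τ.edgeSet ∨ e ∈ Eprime τ := by
  refine ⟨krt γ, ⟨⟨krt_connected hγ, krt_acyclic γ⟩, krt_le γ, krt_cond γ⟩, ?_⟩
  rintro τ' ⟨htree, hle, hcond⟩
  have hprop' : ∀ a b, γ.Adj a b → ¬τ'.Adj a b →
      ∃ p : γ.Walk a b, ∀ f ∈ p.edges, eprec f s(a, b) := by
    intro a b ha hna
    have he : s(a, b) ∈ γ.edgeSet := (SimpleGraph.mem_edgeSet _).mpr ha
    have h2 : s(a, b) ∈ Eprime τ' :=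
      (hcond _ he).resolve_left fun h => hna ((SimpleGraph.mem_edgeSet _).mp h)
    obtain ⟨w⟩ := htree.isConnected.preconnected a b
    refine ⟨w.bypass.transfer γ
      (fun e he' => SimpleGraph.edgeSet_mono hle (w.bypass.edges_subset_edgeSet he')), ?_⟩
    intro f hf
    rw [SimpleGraph.Walk.edges_transfer] at hf
    exact h2.2 a b rfl w.bypass w.bypass_isPath f hf
  have hle1 : τ' ≤ krt γ := by
    intro a b hab
    refine ⟨hle hab, ?_⟩
    rintro ⟨p, hp⟩
    obtain ⟨q, hq⟩ := lemA hprop' _ s(a, b) le_rfl a b p hp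
    have hp0 : (SimpleGraph.Walk.cons hab SimpleGraph.Walk.nil).IsPath := by
      simp [hab.ne]
    have huniq := (isAcyclic_iff_path_unique.mp htree.IsAcyclic)
      ⟨q.bypass, q.bypass_isPath⟩ ⟨SimpleGraph.Walk.cons hab SimpleGraph.Walk.nil, hp0⟩
    have hmem : s(a, b) ∈ q.bypass.edges := by
      rw [Subtype.mk_eq_mk.mp huniq]; simp
    have := hq _ (q.edges_bypass_subset hmem)
    exact absurd ((eprec_iff _ _).mp this) (lt_irrefl _)
  have hle2 : krt γ ≤ τ' := by
    intro a b hab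
    obtain ⟨w⟩ := htree.isConnected.preconnected a b
    have hsub : ∀ e ∈ w.bypass.edges, e ∈ (krt γ).edgeSet := fun e he =>
      SimpleGraph.edgeSet_mono hle1 (w.bypass.edges_subset_edgeSet he)
    set q := w.bypass.transfer (krt γ) hsub with hqdef
    have hqpath : q.IsPath := by
      rw [SimpleGraph.Walk.isPath_def, hqdef, SimpleGraph.Walk.support_transfer]
      exact (SimpleGraph.Walk.isPath_def _).mp w.bypass_isPath
    have hp0 : (SimpleGraph.Walk.cons hab SimpleGraph.Walk.nil).IsPath := by
      simp [hab.ne]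
    have huniq := (isAcyclic_iff_path_unique.mp (krt_acyclic γ))
      ⟨q, hqpath⟩ ⟨SimpleGraph.Walk.cons hab SimpleGraph.Walk.nil, hp0⟩
    have hmem : s(a, b) ∈ q.edges := by
      rw [Subtype.mk_eq_mk.mp huniq]; simp
    rw [hqdef, SimpleGraph.Walk.edges_transfer] at hmem
    exact (SimpleGraph.mem_edgeSet _).mp (w.bypass.edges_subset_edgeSet hmem)
  exact le_antisymm hle1 hle2
end

section
/- In ℝ^3, for 0 < r < R and two points x, y at distance exactly 2R, the volume of the overlap of depletion layers |B(x,R+r) ∩ B(y,R+r)| equals V_ov = (2π/3) r^2 (3R + 2r). -/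
open MeasureTheory Metric


lemma disc_vol (c : ℝ) :
    volume {q : Fin 2 → ℝ | q 0 ^ 2 + q 1 ^ 2 < c} = ENNReal.ofReal (Real.pi * c) := by
  rcases le_or_gt c 0 with hc | hc
  · have : {q : Fin 2 → ℝ | q 0 ^ 2 + q 1 ^ 2 < c} = ∅ := by
      ext q; simp only [Set.mem_setOf_eq, Set.mem_empty_iff_false, iff_false, not_lt]
      nlinarith [sq_nonneg (q 0), sq_nonneg (q 1)]
    rw [this, measure_empty, ENNReal.ofReal_of_nonpos]
    exact mul_nonpos_of_nonneg_of_nonpos Real.pi_pos.le hc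
  · have key := (EuclideanSpace.volume_preserving_symm_measurableEquiv_toLp (Fin 2)).measure_preimage
      (s := {q : Fin 2 → ℝ | q 0 ^ 2 + q 1 ^ 2 < c}) ?_
    · have him : (MeasurableEquiv.toLp 2 (Fin 2 → ℝ)).symm ⁻¹' {q : Fin 2 → ℝ | q 0 ^ 2 + q 1 ^ 2 < c}
          = ball (0 : EuclideanSpace ℝ (Fin 2)) (Real.sqrt c) := by
        ext p
        simp only [Set.mem_preimage, Set.mem_setOf_eq, mem_ball, EuclideanSpace.dist_eq,
          Fin.sum_univ_two]
        rw [show (MeasurableEquiv.toLp 2 (Fin 2 → ℝ)).symm p 0 = p 0 from rfl,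
          show (MeasurableEquiv.toLp 2 (Fin 2 → ℝ)).symm p 1 = p 1 from rfl]
        have h0 : ∀ i : Fin 2, dist (p i) ((0 : EuclideanSpace ℝ (Fin 2)) i) ^ 2 = p i ^ 2 := by
          intro i
          simp [Real.dist_eq, sq_abs]
        rw [h0 0, h0 1, Real.sqrt_lt_sqrt_iff (by positivity)]
      rw [him, EuclideanSpace.volume_ball] at key
      rw [← key]
      have : (Fintype.card (Fin 2) : ℝ) = 2 := by simp
      rw [Fintype.card_fin] at *
      rw [show ((2:ℕ):ℝ)/2 + 1 = 2 by norm_num, Real.Gamma_two]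
      rw [← ENNReal.ofReal_pow (Real.sqrt_nonneg c), Real.sq_sqrt hc.le,
        Real.sq_sqrt Real.pi_pos.le]
      rw [← ENNReal.ofReal_mul hc.le]
      ring_nf
    · exact (measurableSet_lt (by fun_prop) measurable_const).nullMeasurableSet


lemma abs_integral (r : ℝ) (hr : 0 < r) : ∫ t in (-r)..r, |t| = r ^ 2 := by
  have i1 : IntervalIntegrable (fun t : ℝ => |t|) volume (-r) 0 :=
    (continuous_abs).intervalIntegrable _ _
  have i2 : IntervalIntegrable (fun t : ℝ => |t|) volume 0 r :=
    (continuous_abs).intervalIntegrable _ _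
  rw [← intervalIntegral.integral_add_adjacent_intervals i1 i2]
  have h1 : (∫ t in (-r)..(0:ℝ), |t|) = ∫ t in (-r)..(0:ℝ), -t := by
    apply intervalIntegral.integral_congr
    intro t ht
    rw [Set.uIcc_of_le (by linarith)] at ht
    exact abs_of_nonpos ht.2
  have h2 : (∫ t in (0:ℝ)..r, |t|) = ∫ t in (0:ℝ)..r, t := by
    apply intervalIntegral.integral_congr
    intro t ht
    rw [Set.uIcc_of_le (by linarith)] at ht
    exact abs_of_nonneg ht.1
  rw [h1, h2, intervalIntegral.integral_neg, integral_id,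
    integral_id]
  ring

lemma g_integral (r R : ℝ) (hr : 0 < r) (hR : 0 < R) :
    (∫ t in (-r)..r, Real.pi * ((R + r) ^ 2 - (|t| + R) ^ 2))
      = (2 * Real.pi / 3) * r ^ 2 * (3 * R + 2 * r) := by
  have e1 : ∀ t : ℝ, Real.pi * ((R + r) ^ 2 - (|t| + R) ^ 2)
      = (Real.pi * ((R + r) ^ 2 - R ^ 2)) + ((-(2 * Real.pi * R)) * |t| + (-Real.pi) * t ^ 2) := by
    intro t
    rw [show (|t| + R) ^ 2 = t ^ 2 + 2 * R * |t| + R ^ 2 by rw [add_sq, sq_abs]; ring]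
    ring
  simp_rw [e1]
  rw [intervalIntegral.integral_add (f := fun _ => Real.pi * ((R + r) ^ 2 - R ^ 2))
    (g := fun t => -(2 * Real.pi * R) * |t| + -Real.pi * t ^ 2) intervalIntegrable_const
    (((continuous_const.mul continuous_abs).add
      (continuous_const.mul (continuous_pow 2))).intervalIntegrable _ _),
    intervalIntegral.integral_add (f := fun t => -(2 * Real.pi * R) * |t|)
      (g := fun t => -Real.pi * t ^ 2)
      ((continuous_const.mul continuous_abs).intervalIntegrable _ _)
      ((continuous_const.mul (continuous_pow 2)).intervalIntegrable _ _),
    intervalIntegral.integral_const_mul, intervalIntegral.integral_const_mul,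
    abs_integral r hr, intervalIntegral.integral_const_mul, integral_pow, intervalIntegral.integral_const]
  simp only [smul_eq_mul]
  push_cast
  ring


lemma lintegral_g (r R : ℝ) (hr : 0 < r) (hR : 0 < R) :
    (∫⁻ t : ℝ, ENNReal.ofReal (Real.pi * ((R + r) ^ 2 - (|t| + R) ^ 2)))
      = ENNReal.ofReal ((2 * Real.pi / 3) * r ^ 2 * (3 * R + 2 * r)) := by
  set g : ℝ → ℝ := fun t => Real.pi * ((R + r) ^ 2 - (|t| + R) ^ 2) with hg
  set f : ℝ → ℝ := fun t => max (g t) 0 with hf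
  have hgc : Continuous g := by fun_prop
  have hfc : Continuous f := hgc.max continuous_const
  have hout : ∀ t : ℝ, t ∉ Set.Icc (-r) r → f t = 0 := by
    intro t ht
    have hrt : r < |t| := by
      simp only [Set.mem_Icc, not_and_or, not_le] at ht
      rcases ht with h | h
      · calc r < -t := by linarith
          _ ≤ |t| := neg_le_abs t
      · exact lt_of_lt_of_le h (le_abs_self t)
    have : g t ≤ 0 := by
      show Real.pi * ((R + r) ^ 2 - (|t| + R) ^ 2) ≤ 0
      have h2 : (0:ℝ) < (|t| - r) * (|t| + r + 2 * R) :=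
        mul_pos (sub_pos.mpr hrt) (by positivity)
      nlinarith [Real.pi_pos]
    simp only [hf, max_eq_right this]
  have hsupp : HasCompactSupport f := HasCompactSupport.intro isCompact_Icc hout
  have hfi : Integrable f := hfc.integrable_of_hasCompactSupport hsupp
  have h1 : ∀ t : ℝ, ENNReal.ofReal (g t) = ENNReal.ofReal (f t) := by
    intro t
    rcases le_total (g t) 0 with h | h
    · rw [ENNReal.ofReal_of_nonpos h, hf]
      simp [max_eq_right h]
    · rw [hf]; simp [max_eq_left h]
  calc (∫⁻ t : ℝ, ENNReal.ofReal (g t)) = ∫⁻ t : ℝ, ENNReal.ofReal (f t) := by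
        exact lintegral_congr h1
    _ = ENNReal.ofReal (∫ t : ℝ, f t) :=
        (ofReal_integral_eq_lintegral_ofReal hfi (Filter.Eventually.of_forall fun t => le_max_right _ _)).symm
    _ = ENNReal.ofReal ((2 * Real.pi / 3) * r ^ 2 * (3 * R + 2 * r)) := by
        congr 1
        rw [← setIntegral_eq_integral_of_forall_compl_eq_zero hout]
        have heq : Set.EqOn f g (Set.Icc (-r) r) := by
          intro t ht
          simp only [Set.mem_Icc] at ht
          have habs : |t| ≤ r := abs_le.mpr ⟨ht.1, ht.2⟩
          have : 0 ≤ g t := by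
            show 0 ≤ Real.pi * ((R + r) ^ 2 - (|t| + R) ^ 2)
            have h2 : (0:ℝ) ≤ (r - |t|) * (r + |t| + 2 * R) :=
              mul_nonneg (by linarith) (by positivity)
            nlinarith [Real.pi_pos]
          simp [hf, max_eq_left this]
        rw [setIntegral_congr_fun measurableSet_Icc heq,
          MeasureTheory.integral_Icc_eq_integral_Ioc,
          ← intervalIntegral.integral_of_le (by linarith : -r ≤ r)]
        exact g_integral r R hr hR


lemma lens_vol (r R : ℝ) (hr : 0 < r) (hR : 0 < R) :
    volume {p : Fin 3 → ℝ | (p 0 + R) ^ 2 + p 1 ^ 2 + p 2 ^ 2 < (R + r) ^ 2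
        ∧ (p 0 - R) ^ 2 + p 1 ^ 2 + p 2 ^ 2 < (R + r) ^ 2}
      = ENNReal.ofReal ((2 * Real.pi / 3) * r ^ 2 * (3 * R + 2 * r)) := by
  set S : Set (Fin 3 → ℝ) := {p | (p 0 + R) ^ 2 + p 1 ^ 2 + p 2 ^ 2 < (R + r) ^ 2
        ∧ (p 0 - R) ^ 2 + p 1 ^ 2 + p 2 ^ 2 < (R + r) ^ 2} with hS
  have hSm : MeasurableSet S := by
    rw [hS]
    apply IsOpen.measurableSet
    have c1 : Continuous fun p : Fin 3 → ℝ => (p 0 + R) ^ 2 + p 1 ^ 2 + p 2 ^ 2 := by fun_prop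
    have c2 : Continuous fun p : Fin 3 → ℝ => (p 0 - R) ^ 2 + p 1 ^ 2 + p 2 ^ 2 := by fun_prop
    exact (isOpen_lt c1 continuous_const).inter (isOpen_lt c2 continuous_const)
  set ψ := MeasurableEquiv.piFinSuccAbove (fun _ : Fin 3 => ℝ) 0 with hψ
  have hmp := (volume_preserving_piFinSuccAbove (fun _ : Fin 3 => ℝ) 0).symm
  have key := hmp.measure_preimage (s := S) hSm.nullMeasurableSet
  have hpre : (ψ.symm) ⁻¹' S = {z : ℝ × (Fin 2 → ℝ) |
      (z.1 + R) ^ 2 + z.2 0 ^ 2 + z.2 1 ^ 2 < (R + r) ^ 2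
        ∧ (z.1 - R) ^ 2 + z.2 0 ^ 2 + z.2 1 ^ 2 < (R + r) ^ 2} := by
    ext ⟨t, q⟩
    have h0 : (ψ.symm (t, q)) 0 = t := rfl
    have h1 : (ψ.symm (t, q)) 1 = q 0 := rfl
    have h2 : (ψ.symm (t, q)) 2 = q 1 := rfl
    simp only [Set.mem_preimage, hS, Set.mem_setOf_eq, h0, h1, h2]
  rw [← key, hpre]
  set T : Set (ℝ × (Fin 2 → ℝ)) := {z : ℝ × (Fin 2 → ℝ) |
      (z.1 + R) ^ 2 + z.2 0 ^ 2 + z.2 1 ^ 2 < (R + r) ^ 2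
        ∧ (z.1 - R) ^ 2 + z.2 0 ^ 2 + z.2 1 ^ 2 < (R + r) ^ 2} with hT
  have hTm : MeasurableSet T := by
    rw [hT]
    apply IsOpen.measurableSet
    have c1 : Continuous fun z : ℝ × (Fin 2 → ℝ) => (z.1 + R) ^ 2 + z.2 0 ^ 2 + z.2 1 ^ 2 := by
      fun_prop
    have c2 : Continuous fun z : ℝ × (Fin 2 → ℝ) => (z.1 - R) ^ 2 + z.2 0 ^ 2 + z.2 1 ^ 2 := by
      fun_prop
    exact (isOpen_lt c1 continuous_const).inter (isOpen_lt c2 continuous_const)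
  rw [MeasureTheory.Measure.volume_eq_prod, Measure.prod_apply hTm]
  have hslice : ∀ t : ℝ, (Prod.mk t ⁻¹' T)
      = {q : Fin 2 → ℝ | q 0 ^ 2 + q 1 ^ 2 < (R + r) ^ 2 - (|t| + R) ^ 2} := by
    intro t
    ext q
    simp only [hT, Set.mem_preimage, Set.mem_setOf_eq]
    rcases le_total 0 t with ht | ht
    · rw [abs_of_nonneg ht]
      constructor
      · rintro ⟨h1, _⟩; linarith
      · intro h
        refine ⟨by linarith, ?_⟩
        nlinarith [mul_nonneg ht hR.le]
    · rw [abs_of_nonpos ht]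
      constructor
      · rintro ⟨_, h2⟩; nlinarith
      · intro h
        refine ⟨?_, by nlinarith⟩
        nlinarith [mul_nonneg (neg_nonneg.mpr ht) hR.le]
  calc (∫⁻ t : ℝ, volume (Prod.mk t ⁻¹' T))
      = ∫⁻ t : ℝ, ENNReal.ofReal (Real.pi * ((R + r) ^ 2 - (|t| + R) ^ 2)) := by
        refine lintegral_congr fun t => ?_
        rw [hslice t, disc_vol]
    _ = ENNReal.ofReal ((2 * Real.pi / 3) * r ^ 2 * (3 * R + 2 * r)) := lintegral_g r R hr hR


theorem stmt16 (r R : ℝ) (hr : 0 < r) (hrR : r < R)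
    (x y : EuclideanSpace ℝ (Fin 3)) (hxy : dist x y = 2 * R) :
    (volume (ball x (R + r) ∩ ball y (R + r))).toReal
      = (2 * Real.pi / 3) * r ^ 2 * (3 * R + 2 * r) := by
  have hR : 0 < R := hr.trans hrR
  set ρ : ℝ := R + r with hρ
  set m : EuclideanSpace ℝ (Fin 3) := midpoint ℝ x y with hm
  set v : EuclideanSpace ℝ (Fin 3) := y - m with hv
  have h2m : m + m = x + y := by rw [hm]; exact midpoint_add_self ℝ x y
  have hxm : x - m = -v := by
    rw [hv, neg_sub, sub_eq_sub_iff_add_eq_add]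
    exact h2m.symm
  have hnv : ‖v‖ = R := by
    rw [hv, ← dist_eq_norm, dist_comm, hm, dist_midpoint_right]
    rw [hxy]
    simp
  set e : EuclideanSpace ℝ (Fin 3) := EuclideanSpace.single (0 : Fin 3) R with he
  have hne : ‖v‖ = ‖e‖ := by
    rw [hnv, he, EuclideanSpace.norm_single, Real.norm_eq_abs, abs_of_pos hR]
  -- step 1: translate
  have step1 : volume (ball x ρ ∩ ball y ρ) = volume (ball (-v) ρ ∩ ball v ρ) := by
    have h := (measurePreserving_add_right
      (volume : Measure (EuclideanSpace ℝ (Fin 3))) m).measure_preimage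
      (s := ball x ρ ∩ ball y ρ)
      ((measurableSet_ball.inter measurableSet_ball).nullMeasurableSet)
    rw [← h]
    congr 1
    ext p
    simp only [Set.mem_preimage, Set.mem_inter_iff, mem_ball, dist_eq_norm]
    rw [show p + m - x = p - (x - m) by abel, show p + m - y = p - (y - m) by abel,
      hxm, ← hv]
  -- step 2: rotate
  set f := Submodule.reflection (ℝ ∙ (v - e))ᗮ with hf
  have hfv : f v = e := Submodule.reflection_sub hne
  have step2 : volume (ball (-v) ρ ∩ ball v ρ) = volume (ball (-e) ρ ∩ ball e ρ) := by
    have h := f.measurePreserving.measure_preimage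
      (s := ball (-e) ρ ∩ ball e ρ)
      ((measurableSet_ball.inter measurableSet_ball).nullMeasurableSet)
    rw [← h]
    congr 1
    ext p
    simp only [Set.mem_preimage, Set.mem_inter_iff, mem_ball]
    rw [show (-e : EuclideanSpace ℝ (Fin 3)) = f (-v) by rw [map_neg, hfv],
      show (e : EuclideanSpace ℝ (Fin 3)) = f v from hfv.symm,
      f.dist_map, f.dist_map]
  -- step 3: transfer to pi
  have hρ0 : (0:ℝ) < ρ := by positivity
  have step3 : volume (ball (-e) ρ ∩ ball e ρ)
      = volume {p : Fin 3 → ℝ | (p 0 + R) ^ 2 + p 1 ^ 2 + p 2 ^ 2 < ρ ^ 2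
        ∧ (p 0 - R) ^ 2 + p 1 ^ 2 + p 2 ^ 2 < ρ ^ 2} := by
    have h := (MeasurePreserving.symm _
      (EuclideanSpace.volume_preserving_symm_measurableEquiv_toLp (Fin 3))).measure_preimage
      (s := ball (-e) ρ ∩ ball e ρ)
      ((measurableSet_ball.inter measurableSet_ball).nullMeasurableSet)
    rw [← h]
    congr 1
    ext p
    have hc : ∀ i : Fin 3, ((MeasurableEquiv.toLp 2 (Fin 3 → ℝ)).symm.symm p) i = p i :=
      fun i => rfl
    have he0 : e 0 = R := by rw [he]; simp [EuclideanSpace.single_apply]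
    have he1 : e 1 = 0 := by rw [he]; simp [EuclideanSpace.single_apply]
    have he2 : e 2 = 0 := by rw [he]; simp [EuclideanSpace.single_apply]
    simp only [Set.mem_preimage, Set.mem_inter_iff, mem_ball, Set.mem_setOf_eq,
      EuclideanSpace.dist_eq, Fin.sum_univ_three, Real.dist_eq, hc]
    rw [Real.sqrt_lt' hρ0, Real.sqrt_lt' hρ0]
    simp only [sq_abs]
    rw [show ((-e) 0) = -R by rw [he0.symm]; rfl,
      show ((-e) 1) = -(0:ℝ) by rw [he1.symm]; rfl,
      show ((-e) 2) = -(0:ℝ) by rw [he2.symm]; rfl, he0, he1, he2]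
    simp only [sub_neg_eq_add, neg_zero, sub_zero]
  rw [step1, step2, step3, hρ, lens_vol r R hr hR, ENNReal.toReal_ofReal]
  exact mul_nonneg (mul_nonneg (by positivity) (sq_nonneg r)) (by linarith)
end

section
/- Connectivity transfer for touching hard-sphere clouds: let 0 < r < R, let y_1,...,y_n ∈ ℝ^d be such that the graph on {1,...,n} with edges {i,j} whenever |y_i - y_j| < 2r is connected, and let x_1, x_2 ∈ ℝ^d with |x_1 - x_2| ≥ 2R. If there exist indices j_1, j_2 with |x_1 - y_{j_1}| < R + r and |x_2 - y_{j_2}| < R + r, then there exists an index j with R - r ≤ |x_1 - y_j| < R + r. -/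
/-- Connectivity transfer for touching hard-sphere clouds: a connected chain of small
spheres of radius `r` touching two non-overlapping large spheres of radius `R` must have a
point in the corona `{y : R - r ≤ |x₁ - y| < R + r}` of the first large sphere. -/
theorem stmt17 {d n : ℕ} (r R : ℝ) (hr : 0 < r) (hrR : r < R)
    (y : Fin n → EuclideanSpace ℝ (Fin d)) (x₁ x₂ : EuclideanSpace ℝ (Fin d))
    (hconn : (SimpleGraph.fromRel (fun i j => dist (y i) (y j) < 2 * r)).Connected)
    (hx : 2 * R ≤ dist x₁ x₂)
    (j₁ j₂ : Fin n) (h1 : dist x₁ (y j₁) < R + r) (h2 : dist x₂ (y j₂) < R + r) :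
    ∃ j, R - r ≤ dist x₁ (y j) ∧ dist x₁ (y j) < R + r := by
  have hfar : R - r ≤ dist x₁ (y j₂) := by
    have := dist_triangle x₁ (y j₂) x₂
    rw [dist_comm (y j₂) x₂] at this
    linarith
  obtain ⟨w⟩ := hconn.preconnected j₁ j₂
  clear hconn hx h2
  revert h1 hfar
  induction w with
  | nil => exact fun h1 hfar => ⟨_, hfar, h1⟩
  | @cons a b c hab w ih =>
      intro h1 hfar
      by_cases hge : R - r ≤ dist x₁ (y a)
      · exact ⟨a, hge, h1⟩
      · push_neg at hge
        rw [SimpleGraph.fromRel_adj] at hab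
        have hd : dist (y a) (y b) < 2 * r := by
          rcases hab.2 with h | h
          · exact h
          · rwa [dist_comm]
        have : dist x₁ (y b) < R + r := by
          have := dist_triangle x₁ (y a) (y b)
          linarith
        exact ih this hfar
end
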